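/- Let X be a Banach space and S, T ∈ L(X) with S ∈ comm_w(T). Then for all integers m ≥ 1 and n ≥ 3, the dimension of the quotient N(Tⁿ) / (N((T+S)^{n+m-1}) ∩ N(Tⁿ)) is at most dim R(S^m), and likewise dim N((T+S)ⁿ) / (N(T^{n+m-1}) ∩ N((T+S)ⁿ)) ≤ dim R(S^m). -/

import Mathlib

section AlgAux
variable {R : Type*} [Ring R] (S T : R)

private lemma wSTS' (h1 : Commute (S*T) S) : S*T*S = S*S*T := by
  rw [h1.eq, ← mul_assoc]

private lemma wTSS' (h1 : Commute (S*T) S) (h3 : Commute (T*S) S) : T*S*S = S*S*T := by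
  rw [h3.eq, ← mul_assoc, wSTS' S T h1]

private lemma wTST' (h2 : Commute (S*T) T) : T*S*T = S*T*T := by
  have h : S*T*T = T*(S*T) := h2.eq
  rw [← mul_assoc] at h
  exact h.symm

private lemma wTTS' (h2 : Commute (S*T) T) (h4 : Commute (T*S) T) : T*T*S = S*T*T := by
  have h : T*S*T = T*(T*S) := h4.eq
  rw [← mul_assoc] at h
  rw [← h, wTST' S T h2]

private lemma tpowS' (h2 : Commute (S*T) T) (h4 : Commute (T*S) T) :
    ∀ b : ℕ, T^(b+2) * S = S * T^(b+2) := by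
  intro b
  induction b with
  | zero =>
    rw [pow_two, mul_assoc T T S]
    calc T*(T*S) = T*T*S := by rw [← mul_assoc]
    _ = S*T*T := wTTS' S T h2 h4
    _ = S*(T*T) := by rw [mul_assoc]
  | succ b ih =>
    have e1 : T^(b+1+2) = T * T^(b+2) := by rw [← pow_succ']
    rw [e1, mul_assoc, ih, ← mul_assoc]
    have e2 : T^(b+2) = T * T^(b+1) := by rw [← pow_succ']
    rw [e2, ← mul_assoc, wTST' S T h2, mul_assoc (S*T) T, ← mul_assoc S T]

private lemma sTS' (h1 : Commute (S*T) S) (j : ℕ) : S^(j+1)*T*S = S^(j+2)*T := by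
  rw [pow_succ, mul_assoc (S^j) S T, mul_assoc (S^j) (S*T) S,
    show (S*T)*S = S*S*T from wSTS' S T h1, ← mul_assoc (S^j) (S*S) T,
    ← mul_assoc (S^j) S S, ← pow_succ, ← pow_succ]

private lemma rightT' (k a : ℕ) : S^(k-a) * T^a * T = S^(k-a) * T^(a+1) := by
  rw [mul_assoc, ← pow_succ]

private lemma rightS' (h1 : Commute (S*T) S) (h2 : Commute (S*T) T) (h4 : Commute (T*S) T)
    (k a : ℕ) (hk : 3 ≤ k) (ha : a ≤ k) :
    S^(k-a) * T^a * S = S^(k+1-a) * T^a := by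
  match a with
  | 0 => simp [← pow_succ]
  | 1 =>
    have e : k - 1 = (k-2)+1 := by omega
    rw [pow_one, e, sTS' S T h1, show (k-2)+2 = k+1-1 from by omega]
  | (b+2) =>
    rw [mul_assoc, tpowS' S T h2 h4 b, ← mul_assoc, ← pow_succ]
    congr 2
    omega

private lemma cube' (h1 : Commute (S*T) S) (h2 : Commute (S*T) T)
    (h3 : Commute (T*S) S) (h4 : Commute (T*S) T) :
    (T+S)^3 = T*T*T + (S*T*T + S*T*T + S*T*T) + (S*S*T + S*S*T + S*S*T) + S*S*S := by
  have e : (T+S)^3 = T*T*T + (T*T*S + T*S*T + S*T*T) + (T*S*S + S*T*S + S*S*T) + S*S*S := by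
    noncomm_ring
  rw [e, wTTS' S T h2 h4, wTST' S T h2, wTSS' S T h1 h3, wSTS' S T h1]

private lemma expand' (h1 : Commute (S*T) S) (h2 : Commute (S*T) T)
    (h3 : Commute (T*S) S) (h4 : Commute (T*S) T) :
    ∀ k : ℕ, 3 ≤ k →
    ∃ f : ℕ → ℕ, (T + S)^k = ∑ a ∈ Finset.range (k+1), f a • (S^(k-a) * T^a) := by
  intro k hk
  induction k, hk using Nat.le_induction with
  | base =>
    refine ⟨fun a => Nat.choose 3 a, ?_⟩
    rw [cube' S T h1 h2 h3 h4]
    simp [Finset.sum_range_succ, pow_succ]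
    noncomm_ring
  | succ k hk ih =>
    obtain ⟨f, hf⟩ := ih
    refine ⟨fun b => (match b with | 0 => 0 | Nat.succ b => f b) + (if b ≤ k then f b else 0), ?_⟩
    rw [pow_succ, hf, Finset.sum_mul]
    have e1 : ∀ a ∈ Finset.range (k+1),
        (f a • (S^(k-a)*T^a)) * (T+S)
          = f a • (S^(k-a)*T^(a+1)) + f a • (S^(k+1-a)*T^a) := by
      intro a ha
      rw [mul_add, smul_mul_assoc, smul_mul_assoc, rightT',
        rightS' S T h1 h2 h4 k a hk (Finset.mem_range_succ_iff.mp ha)]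
    rw [Finset.sum_congr rfl e1, Finset.sum_add_distrib]
    simp only [add_smul]
    rw [Finset.sum_add_distrib]
    congr 1
    · conv_rhs => rw [Finset.sum_range_succ']
      simp only [Nat.add_sub_add_right, zero_smul, add_zero]
    · conv_rhs => rw [Finset.sum_range_succ]
      rw [if_neg (by omega : ¬ (k+1 ≤ k))]
      simp only [zero_smul, add_zero]
      refine Finset.sum_congr rfl fun a ha => ?_
      rw [if_pos (Finset.mem_range_succ_iff.mp ha)]

end AlgAux

section RankAux
set_option linter.unusedSectionVars false
set_option linter.unusedVariables false
variable {X : Type*} [NormedAddCommGroup X] [NormedSpace ℂ X] [CompleteSpace X]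

private lemma aux_rank (S T : X →L[ℂ] X)
    (h1 : Commute (S * T) S) (h2 : Commute (S * T) T)
    (h3 : Commute (T * S) S) (h4 : Commute (T * S) T)
    (m n : ℕ) (hm : 1 ≤ m) (hn : 3 ≤ n) :
    Module.rank ℂ
      ((LinearMap.ker ((T ^ n : X →L[ℂ] X) : X →ₗ[ℂ] X) : Submodule ℂ X) ⧸
        ((LinearMap.ker (((T + S) ^ (n + m - 1) : X →L[ℂ] X) : X →ₗ[ℂ] X) ⊓ LinearMap.ker ((T ^ n : X →L[ℂ] X) : X →ₗ[ℂ] X)).comap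
          (LinearMap.ker ((T ^ n : X →L[ℂ] X) : X →ₗ[ℂ] X) : Submodule ℂ X).subtype))
      ≤ Module.rank ℂ (LinearMap.range ((S ^ m : X →L[ℂ] X) : X →ₗ[ℂ] X)) := by
  obtain ⟨f, hf⟩ := expand' S T h1 h2 h3 h4 (n+m-1) (by omega)
  have hmem : ∀ c : (LinearMap.ker ((T ^ n : X →L[ℂ] X) : X →ₗ[ℂ] X) : Submodule ℂ X),
      ((T + S) ^ (n + m - 1)) (c : X) ∈ LinearMap.range ((S ^ m : X →L[ℂ] X) : X →ₗ[ℂ] X) := by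
    intro c
    have hc : (T ^ n) (c : X) = 0 := c.2
    rw [hf, ContinuousLinearMap.sum_apply]
    apply Submodule.sum_mem
    intro a ha
    rw [ContinuousLinearMap.smul_apply]
    apply Submodule.smul_of_tower_mem
    by_cases han : n ≤ a
    · have hTa : T ^ a = T ^ (a - n) * T ^ n := by
        rw [← pow_add]; congr 1; omega
      rw [ContinuousLinearMap.mul_apply, hTa, ContinuousLinearMap.mul_apply, hc,
        map_zero, map_zero]
      exact Submodule.zero_mem _
    · have hSa : S ^ (n+m-1-a) = S ^ m * S ^ (n+m-1-a-m) := by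
        rw [← pow_add]; congr 1; omega
      rw [ContinuousLinearMap.mul_apply, hSa, ContinuousLinearMap.mul_apply]
      exact ⟨_, rfl⟩
  let φ : (LinearMap.ker ((T ^ n : X →L[ℂ] X) : X →ₗ[ℂ] X) : Submodule ℂ X) →ₗ[ℂ] (LinearMap.range ((S ^ m : X →L[ℂ] X) : X →ₗ[ℂ] X) : Submodule ℂ X) :=
    LinearMap.codRestrict _
      ((((T + S) ^ (n + m - 1)).toLinearMap).comp
        (LinearMap.ker ((T ^ n : X →L[ℂ] X) : X →ₗ[ℂ] X) : Submodule ℂ X).subtype) hmem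
  have hker : LinearMap.ker φ
      = ((LinearMap.ker (((T + S) ^ (n + m - 1) : X →L[ℂ] X) : X →ₗ[ℂ] X) ⊓ LinearMap.ker ((T ^ n : X →L[ℂ] X) : X →ₗ[ℂ] X)).comap
          (LinearMap.ker ((T ^ n : X →L[ℂ] X) : X →ₗ[ℂ] X) : Submodule ℂ X).subtype) := by
    ext x
    simp only [LinearMap.mem_ker, Submodule.mem_comap, Submodule.mem_inf,
      Submodule.coe_subtype, φ, LinearMap.codRestrict]
    constructor
    · intro h
      have := congrArg Subtype.val h
      simp only [LinearMap.coe_mk, AddHom.coe_mk, LinearMap.comp_apply,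
        Submodule.coe_subtype, ZeroMemClass.coe_zero] at this
      exact ⟨this, x.2⟩
    · intro h
      apply Subtype.ext
      simpa using h.1
  rw [← hker]
  exact le_trans (LinearEquiv.rank_eq (LinearMap.quotKerEquivRange φ)).le (Submodule.rank_le _)

end RankAux

theorem kernel_quotient_rank_le {X : Type*} [NormedAddCommGroup X] [NormedSpace ℂ X]
    [CompleteSpace X] (S T : X →L[ℂ] X)
    (h1 : Commute (S * T) S) (h2 : Commute (S * T) T)
    (h3 : Commute (T * S) S) (h4 : Commute (T * S) T)
    (m n : ℕ) (hm : 1 ≤ m) (hn : 3 ≤ n) :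
    Module.rank ℂ
      ((LinearMap.ker ((T ^ n : X →L[ℂ] X) : X →ₗ[ℂ] X) : Submodule ℂ X) ⧸
        ((LinearMap.ker (((T + S) ^ (n + m - 1) : X →L[ℂ] X) : X →ₗ[ℂ] X) ⊓ LinearMap.ker ((T ^ n : X →L[ℂ] X) : X →ₗ[ℂ] X)).comap
          (LinearMap.ker ((T ^ n : X →L[ℂ] X) : X →ₗ[ℂ] X) : Submodule ℂ X).subtype))
      ≤ Module.rank ℂ (LinearMap.range ((S ^ m : X →L[ℂ] X) : X →ₗ[ℂ] X)) ∧
    Module.rank ℂ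
      ((LinearMap.ker (((T + S) ^ n : X →L[ℂ] X) : X →ₗ[ℂ] X) : Submodule ℂ X) ⧸
        ((LinearMap.ker ((T ^ (n + m - 1) : X →L[ℂ] X) : X →ₗ[ℂ] X) ⊓ LinearMap.ker (((T + S) ^ n : X →L[ℂ] X) : X →ₗ[ℂ] X)).comap
          (LinearMap.ker (((T + S) ^ n : X →L[ℂ] X) : X →ₗ[ℂ] X) : Submodule ℂ X).subtype))
      ≤ Module.rank ℂ (LinearMap.range ((S ^ m : X →L[ℂ] X) : X →ₗ[ℂ] X)) := by
  constructor
  · exact aux_rank S T h1 h2 h3 h4 m n hm hn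
  · -- apply aux_rank with S' = -S, T' = T + S
    have cSS_S : Commute (S*S) S := (Commute.refl S).mul_left (Commute.refl S)
    have cSS_T : Commute (S*S) T := by
      show (S*S)*T = T*(S*S)
      rw [← mul_assoc]
      exact (wTSS' S T h1 h3).symm
    have h1' : Commute ((-S) * (T + S)) (-S) := by
      have : Commute (S * (T + S)) S := by
        rw [mul_add]
        exact h1.add_left cSS_S
      simpa [neg_mul] using this.neg_left.neg_right
    have h2' : Commute ((-S) * (T + S)) (T + S) := by
      have : Commute (S * (T + S)) (T + S) := by
        rw [mul_add]
        exact (h2.add_left cSS_T).add_right (h1.add_left cSS_S)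
      simpa [neg_mul] using this.neg_left
    have h3' : Commute ((T + S) * (-S)) (-S) := by
      have : Commute ((T + S) * S) S := by
        rw [add_mul]
        exact h3.add_left cSS_S
      simpa [mul_neg] using this.neg_left.neg_right
    have h4' : Commute ((T + S) * (-S)) (T + S) := by
      have : Commute ((T + S) * S) (T + S) := by
        rw [add_mul]
        exact (h4.add_left cSS_T).add_right (h3.add_left cSS_S)
      simpa [mul_neg] using this.neg_left
    have h := aux_rank (-S) (T + S) h1' h2' h3' h4' m n hm hn
    rw [show T + S + -S = T from by abel] at h
    have hr : (LinearMap.range (((-S) ^ m : X →L[ℂ] X) : X →ₗ[ℂ] X) : Submodule ℂ X) = LinearMap.range ((S ^ m : X →L[ℂ] X) : X →ₗ[ℂ] X) := by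
      rcases Nat.even_or_odd m with he | ho
      · rw [he.neg_pow]
      · rw [ho.neg_pow]
        ext y
        simp only [LinearMap.mem_range]
        constructor
        · rintro ⟨x, rfl⟩
          exact ⟨-x, by simp⟩
        · rintro ⟨x, rfl⟩
          exact ⟨-x, by simp⟩
    rw [hr] at h
    exact h
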